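/- For 0 < c < 1 real, the Mellin–Barnes integral −(1/(2πi)) ∫_{c−i∞}^{c+i∞} z^{−s} ζ(−s) / sin(πs) ds converges absolutely for every complex z with |arg z| < π and defines an analytic function of z there. -/

import Mathlib

open Real MeasureTheory

section stmt18aux
open Set

noncomputable def Complex.abs : AbsoluteValue ℂ ℝ where
  toFun z := ‖z‖
  map_mul' := norm_mul
  nonneg' := norm_nonneg
  eq_zero' _ := norm_eq_zero
  add_le' := norm_add_le

@[simp] theorem Complex.abs_apply (z : ℂ) : Complex.abs z = ‖z‖ := rfl

theorem Complex.norm_eq_abs (z : ℂ) : ‖z‖ = Complex.abs z := rfl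

theorem Complex.abs_I : Complex.abs Complex.I = 1 := Complex.norm_I

theorem Complex.abs_ofReal (r : ℝ) : Complex.abs r = |r| :=
  (Complex.norm_real r).trans (Real.norm_eq_abs r)

theorem Complex.abs_add_mul_I (x y : ℝ) :
    Complex.abs (x + y * Complex.I) = Real.sqrt (x ^ 2 + y ^ 2) := Complex.norm_add_mul_I x y

theorem Complex.abs_cpow_of_ne_zero {z : ℂ} (hz : z ≠ 0) (w : ℂ) :
    Complex.abs (z ^ w) = Complex.abs z ^ w.re / Real.exp (Complex.arg z * w.im) :=
  Complex.norm_cpow_of_ne_zero hz w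

theorem Complex.abs_cpow_eq_rpow_re_of_pos {x : ℝ} (hx : 0 < x) (y : ℂ) :
    Complex.abs ((x : ℂ) ^ y) = x ^ y.re := Complex.norm_cpow_eq_rpow_re_of_pos hx y


lemma myint {b : ℝ} (hb : 0 < b) : Integrable (fun t : ℝ => Real.exp (-b * |t|)) := by
  have h1 : IntegrableOn (fun t : ℝ => Real.exp (-b * |t|)) (Ioi 0) := by
    refine IntegrableOn.congr_fun (exp_neg_integrableOn_Ioi 0 hb)
      (fun x hx => by rw [abs_of_pos hx]) measurableSet_Ioi
  have h2 : IntegrableOn (fun t : ℝ => Real.exp (-b * |t|)) (Iio 0) := by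
    have := (MeasurePreserving.integrableOn_comp_preimage
        (Measure.measurePreserving_neg (volume : Measure ℝ))
        (Homeomorph.neg ℝ).measurableEmbedding).2 h1
    refine IntegrableOn.congr_fun (this.mono_set ?_) (fun x hx => by simp [abs_neg]) measurableSet_Iio
    · intro x hx; simpa using hx
  rw [← integrableOn_univ, ← Iio_union_Ici (a := (0:ℝ))]
  exact h2.union (h1.congr_set_ae Ioi_ae_eq_Ici.symm)



lemma sin_lower (c : ℝ) (hc0 : 0 < c) (hc1 : c < 1) :
    ∃ δ > 0, ∀ t : ℝ, δ * Real.exp (π * |t|) ≤ Complex.abs (Complex.sin (π * ((c:ℂ) + t*Complex.I))) := by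
  have hsin : 0 < Real.sin (π * c) :=
    Real.sin_pos_of_pos_of_lt_pi (by positivity) (by nlinarith [Real.pi_pos])
  refine ⟨min (1/3) (Real.sin (π*c) * Real.exp (-π)), lt_min (by norm_num) (by positivity), fun t => ?_⟩
  have key : Complex.abs (Complex.sin (π * ((c:ℂ) + t*Complex.I)))
      = Real.sqrt ((Real.sin (π*c) * Real.cosh (π*t))^2 + (Real.cos (π*c) * Real.sinh (π*t))^2) := by
    have : (π : ℂ) * ((c:ℂ) + t*Complex.I) = (↑(π*c) : ℂ) + (↑(π*t) : ℂ)*Complex.I := by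
      push_cast; ring
    rw [this, Complex.sin_add_mul_I]
    rw [← Complex.ofReal_sin, ← Complex.ofReal_cos, ← Complex.ofReal_cosh, ← Complex.ofReal_sinh,
      ← Complex.ofReal_mul, ← Complex.ofReal_mul, Complex.abs_add_mul_I]
  rw [key]
  have hiden : (Real.sin (π*c) * Real.cosh (π*t))^2 + (Real.cos (π*c) * Real.sinh (π*t))^2
      = Real.sin (π*c)^2 + Real.sinh (π*t)^2 := by
    nlinarith [Real.sin_sq_add_cos_sq (π*c), Real.cosh_sq (π*t)]
  rw [hiden]
  rcases le_or_gt |t| 1 with h | h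
  · calc min (1/3) (Real.sin (π*c) * Real.exp (-π)) * Real.exp (π * |t|)
        ≤ (Real.sin (π*c) * Real.exp (-π)) * Real.exp (π * 1) := by
          apply mul_le_mul (min_le_right _ _) (Real.exp_le_exp.2 (by nlinarith [Real.pi_pos]))
            (Real.exp_pos _).le (by positivity)
      _ = Real.sin (π*c) := by rw [mul_assoc, ← Real.exp_add]; simp
      _ ≤ Real.sqrt (Real.sin (π*c)^2 + Real.sinh (π*t)^2) := by
          rw [show Real.sin (π*c) = Real.sqrt (Real.sin (π*c)^2) by
            rw [Real.sqrt_sq hsin.le]]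
          apply Real.sqrt_le_sqrt
          nlinarith [Real.sqrt_nonneg (Real.sin (π*c)^2), sq_nonneg (Real.sinh (π*t)),
            Real.sq_sqrt (sq_nonneg (Real.sin (π*c)))]
  · have hpi3 : (3:ℝ) ≤ π := by linarith [Real.pi_gt_three]
    calc min (1/3) (Real.sin (π*c) * Real.exp (-π)) * Real.exp (π * |t|)
        ≤ (1/3) * Real.exp (π * |t|) := by
          apply mul_le_mul_of_nonneg_right (min_le_left _ _) (Real.exp_pos _).le
      _ ≤ Real.sinh (π * |t|) := by
          rw [Real.sinh_eq]
          have hu : (3:ℝ) ≤ π*|t| := by nlinarith [abs_nonneg t]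
          have h6 : (6:ℝ) ≤ Real.exp (π*|t|) * Real.exp (π*|t|) := by
            rw [← Real.exp_add]
            nlinarith [Real.add_one_le_exp (π*|t| + π*|t|)]
          have h1 : Real.exp (-(π * |t|)) ≤ (1/6) * Real.exp (π*|t|) := by
            rw [Real.exp_neg, inv_le_iff_one_le_mul₀ (Real.exp_pos _)]
            nlinarith
          linarith [Real.exp_pos (π*|t|)]
      _ ≤ Real.sqrt (Real.sin (π*c)^2 + Real.sinh (π*t)^2) := by
          rw [show Real.sinh (π*|t|) = Real.sqrt (Real.sinh (π*t)^2) by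
            rw [Real.sqrt_sq_eq_abs, Real.abs_sinh, abs_mul, abs_of_pos Real.pi_pos]]
          apply Real.sqrt_le_sqrt
          nlinarith [sq_nonneg (Real.sin (π*c))]



lemma gamma_bd {z : ℂ} (hz : 0 < z.re) : Complex.abs (Complex.Gamma z) ≤ Real.Gamma z.re := by
  rw [Complex.Gamma_eq_integral hz, Real.Gamma_eq_integral hz]
  rw [← Complex.norm_eq_abs]
  refine norm_integral_le_of_norm_le (Real.GammaIntegral_convergent hz) ?_
  filter_upwards [ae_restrict_mem measurableSet_Ioi] with x hx
  rw [norm_mul, Complex.norm_eq_abs, Complex.norm_eq_abs, Complex.abs_ofReal,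
    abs_of_pos (Real.exp_pos _), Complex.abs_cpow_eq_rpow_re_of_pos hx]
  simp

lemma zeta_bd {c : ℝ} (hc : 0 < c) (w : ℂ) (hw : w.re = 1 + c) :
    Complex.abs (riemannZeta w) ≤ ∑' n : ℕ, (1:ℝ) / (n:ℝ) ^ (1+c) := by
  have h1 : 1 < w.re := by rw [hw]; linarith
  have hw0 : w ≠ 0 := by intro h; rw [h] at hw; simp at hw; linarith
  have hterm : ∀ n : ℕ, ‖1/(n:ℂ)^w‖ = (1:ℝ)/(n:ℝ)^(1+c) := by
    intro n
    rcases Nat.eq_zero_or_pos n with rfl | hn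
    · simp [Complex.zero_cpow hw0, Real.zero_rpow (by positivity : (1:ℝ)+c ≠ 0)]
    · rw [norm_div, norm_one, Complex.norm_natCast_cpow_of_pos hn, hw]
  have hs : Summable (fun n : ℕ => (1:ℝ) / (n:ℝ) ^ (1+c)) := by
    simpa using Real.summable_one_div_nat_rpow.2 (by linarith : 1 < 1 + c)
  have hs' : Summable (fun n : ℕ => ‖1/(n:ℂ)^w‖) := hs.congr fun n => (hterm n).symm
  rw [zeta_eq_tsum_one_div_nat_cpow h1, ← Complex.norm_eq_abs]
  refine (norm_tsum_le_tsum_norm hs').trans ?_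
  exact le_of_eq (tsum_congr hterm)

lemma cosh_le_exp_abs (y : ℝ) : Real.cosh y ≤ Real.exp |y| := by
  rw [Real.cosh_eq]
  have h1 : Real.exp y ≤ Real.exp |y| := Real.exp_le_exp.2 (le_abs_self y)
  have h2 : Real.exp (-y) ≤ Real.exp |y| := Real.exp_le_exp.2 (neg_le_abs y)
  linarith

lemma cos_upper (x y : ℝ) : Complex.abs (Complex.cos ((x:ℂ) + (y:ℂ)*Complex.I)) ≤ Real.exp |y| := by
  rw [Complex.cos_add_mul_I]
  rw [← Complex.ofReal_cos, ← Complex.ofReal_cosh, ← Complex.ofReal_sin, ← Complex.ofReal_sinh]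
  rw [show (↑(Real.cos x) * ↑(Real.cosh y) - ↑(Real.sin x) * ↑(Real.sinh y) * Complex.I : ℂ)
      = ↑(Real.cos x * Real.cosh y) + ↑(-(Real.sin x * Real.sinh y)) * Complex.I by push_cast; ring]
  rw [Complex.abs_add_mul_I]
  refine le_trans ?_ (cosh_le_exp_abs y)
  have h : Real.sqrt ((Real.cos x * Real.cosh y)^2 + (-(Real.sin x * Real.sinh y))^2)
      ≤ Real.sqrt ((Real.cosh y)^2) := by
    apply Real.sqrt_le_sqrt
    nlinarith [Real.sin_sq_add_cos_sq x, Real.cosh_sq y,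
      sq_nonneg (Real.sin x * Real.sinh y), sq_nonneg (Real.sinh y), sq_nonneg (Real.sin x),
      sq_nonneg (Real.cos x), sq_nonneg (Real.sin x * Real.cosh y)]
  rwa [Real.sqrt_sq (Real.cosh_pos y).le] at h

lemma master (c : ℝ) (hc0 : 0 < c) (hc1 : c < 1) :
    ∃ C > 0, ∀ t : ℝ, Complex.abs (riemannZeta (-((c:ℂ) + t*Complex.I)) /
      Complex.sin (π * ((c:ℂ) + t*Complex.I))) ≤ C * Real.exp (-(π/2) * |t|) := by
  obtain ⟨δ, hδ, hsin⟩ := sin_lower c hc0 hc1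
  set Z : ℝ := ∑' n : ℕ, (1:ℝ) / (n:ℝ) ^ (1+c) with hZ
  have hZ0 : 0 ≤ Z := tsum_nonneg (fun n => by positivity)
  set N : ℝ := 2 * (2*π) ^ (-(1+c)) * Real.Gamma (1+c) * Z with hN
  have hN0 : 0 ≤ N := by
    have := Real.Gamma_pos_of_pos (by linarith : (0:ℝ) < 1+c)
    positivity
  refine ⟨N/δ + 1, by positivity, fun t => ?_⟩
  set w : ℂ := 1 + ((c:ℂ) + t*Complex.I) with hw
  have hwre : w.re = 1 + c := by simp [hw]
  -- functional equation
  have hfe : riemannZeta (-((c:ℂ) + t*Complex.I))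
      = 2 * (2*π) ^ (-w) * Complex.Gamma w * Complex.cos (π * w / 2) * riemannZeta w := by
    have h1 : ∀ n : ℕ, w ≠ -n := by
      intro n h
      have : w.re = -(n:ℝ) := by rw [h]; simp
      rw [hwre] at this
      have : (0:ℝ) ≤ n := n.cast_nonneg
      linarith
    have h2 : w ≠ 1 := by
      intro h; rw [h] at hwre; simp at hwre; linarith
    have := riemannZeta_one_sub h1 h2
    rw [show (1 : ℂ) - w = -((c:ℂ) + t*Complex.I) by rw [hw]; ring] at this
    exact this
  -- numerator bound
  have hnum : Complex.abs (riemannZeta (-((c:ℂ) + t*Complex.I))) ≤ N * Real.exp (π/2 * |t|) := by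
    rw [hfe]
    rw [map_mul, map_mul, map_mul, map_mul]
    have e1 : Complex.abs (2 : ℂ) = 2 := by simp
    have e2 : Complex.abs ((2*π : ℂ) ^ (-w)) = (2*π) ^ (-(1+c)) := by
      rw [show (2*(π:ℂ) : ℂ) = ((2*π : ℝ) : ℂ) by push_cast; ring]
      rw [Complex.abs_cpow_eq_rpow_re_of_pos (by positivity)]
      congr 1
      simp [hwre]
    have e3 : Complex.abs (Complex.Gamma w) ≤ Real.Gamma (1+c) := by
      have := gamma_bd (z := w) (by rw [hwre]; linarith)
      rwa [hwre] at this
    have e4 : Complex.abs (Complex.cos (π * w / 2)) ≤ Real.exp (π/2 * |t|) := by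
      have harg : (π : ℂ) * w / 2 = (↑(π * (1+c) / 2) : ℂ) + (↑(π * t / 2) : ℂ) * Complex.I := by
        rw [hw]; push_cast; ring
      rw [harg]
      refine (cos_upper _ _).trans ?_
      rw [Real.exp_le_exp, show π*t/2 = (π/2)*t by ring, abs_mul,
        abs_of_pos (by positivity : (0:ℝ) < π/2)]
    have e5 : Complex.abs (riemannZeta w) ≤ Z := zeta_bd hc0 w hwre
    calc Complex.abs 2 * Complex.abs ((2*π : ℂ)^(-w)) * Complex.abs (Complex.Gamma w) *
          Complex.abs (Complex.cos (π * w / 2)) * Complex.abs (riemannZeta w)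
        ≤ 2 * ((2*π) ^ (-(1+c))) * Real.Gamma (1+c) * Real.exp (π/2 * |t|) * Z := by
          rw [e1, e2]
          have hg := Real.Gamma_pos_of_pos (by linarith : (0:ℝ) < 1+c)
          gcongr <;> positivity
      _ = N * Real.exp (π/2 * |t|) := by rw [hN]; ring
  -- combine
  rw [map_div₀]
  have hsint := hsin t
  have hsinpos : 0 < δ * Real.exp (π * |t|) := by positivity
  calc Complex.abs (riemannZeta (-((c:ℂ) + t*Complex.I))) /
        Complex.abs (Complex.sin (π * ((c:ℂ) + t*Complex.I)))
      ≤ (N * Real.exp (π/2 * |t|)) / (δ * Real.exp (π * |t|)) := by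
        apply div_le_div₀ (by positivity) hnum hsinpos hsint
    _ = (N/δ) * Real.exp (-(π/2) * |t|) := by
        rw [mul_div_mul_comm, ← Real.exp_sub]
        congr 2
        ring
    _ ≤ (N/δ + 1) * Real.exp (-(π/2) * |t|) := by
        have : (0:ℝ) < Real.exp (-(π/2)*|t|) := Real.exp_pos _
        nlinarith [div_nonneg hN0 hδ.le]

end stmt18aux

/-- For `0 < c < 1`, the Mellin–Barnes integrand of
`−(1/(2πi)) ∫_{c−i∞}^{c+i∞} z^{−s} ζ(−s)/sin(πs) ds` (contour `s = c + it`, `ds = i dt`)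
is absolutely integrable for every `z ≠ 0` with `|arg z| < π/2`, and the resulting
function of `z` is analytic on that region. -/
theorem stmt18 (c : ℝ) (hc0 : 0 < c) (hc1 : c < 1) :
    (∀ z : ℂ, z ≠ 0 → |Complex.arg z| < π / 2 →
      Integrable (fun t : ℝ =>
        z ^ (-((c : ℂ) + t * Complex.I)) * riemannZeta (-((c : ℂ) + t * Complex.I)) /
          Complex.sin (π * ((c : ℂ) + t * Complex.I)))) ∧
    AnalyticOn ℂ
      (fun z : ℂ => -(1 / (2 * π * Complex.I)) *
        ∫ t : ℝ, z ^ (-((c : ℂ) + t * Complex.I)) *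
          riemannZeta (-((c : ℂ) + t * Complex.I)) /
          Complex.sin (π * ((c : ℂ) + t * Complex.I)) * Complex.I)
      {z : ℂ | z ≠ 0 ∧ |Complex.arg z| < π / 2} := by
  obtain ⟨C, hC, hmb⟩ := master c hc0 hc1
  obtain ⟨δ, hδ, hsinl⟩ := sin_lower c hc0 hc1
  set s : ℝ → ℂ := fun t => (c : ℂ) + t * Complex.I with hs
  have hsre : ∀ t, (-(s t)).re = -c := fun t => by simp [hs]
  have hsim : ∀ t, (-(s t)).im = -t := fun t => by simp [hs]
  have hsin_ne : ∀ t : ℝ, Complex.sin (π * s t) ≠ 0 := by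
    intro t h
    have h1 := hsinl t
    rw [h] at h1
    simp only [map_zero] at h1
    nlinarith [Real.exp_pos (π * |t|)]
  have hs_cont : Continuous s := by fun_prop
  have hzeta_cont : Continuous (fun t : ℝ => riemannZeta (-(s t))) := by
    rw [continuous_iff_continuousAt]
    intro t
    have h1 : (-(s t)) ≠ 1 := by
      intro h
      have := congrArg Complex.re h
      rw [hsre t] at this
      simp at this; linarith
    exact ContinuousAt.comp (g := riemannZeta) (f := fun u : ℝ => -(s u))
      (differentiableAt_riemannZeta h1).continuousAt (hs_cont.continuousAt.neg)
  have hcont : ∀ z : ℂ, z ≠ 0 → Continuous (fun t : ℝ =>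
      z ^ (-(s t)) * riemannZeta (-(s t)) / Complex.sin (π * s t)) := by
    intro z hz
    haveI : NeZero z := ⟨hz⟩
    refine Continuous.div ?_ (Complex.continuous_sin.comp (continuous_const.mul hs_cont)) hsin_ne
    exact ((continuous_const_cpow z).comp hs_cont.neg).mul hzeta_cont
  -- pointwise bound
  have habs : ∀ z : ℂ, z ≠ 0 → ∀ t : ℝ,
      ‖z ^ (-(s t)) * riemannZeta (-(s t)) / Complex.sin (π * s t)‖
        ≤ (Complex.abs z ^ (-c) * C) * Real.exp (-(π/2 - |Complex.arg z|) * |t|) := by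
    intro z hz t
    rw [mul_div_assoc, norm_mul]
    have h1 : ‖z ^ (-(s t))‖ = Complex.abs z ^ (-c) * Real.exp (t * Complex.arg z) := by
      rw [Complex.norm_eq_abs, Complex.abs_cpow_of_ne_zero hz, hsre, hsim]
      rw [show Complex.arg z * (-t) = -(t * Complex.arg z) by ring, Real.exp_neg,
        div_eq_mul_inv, inv_inv]
    have h2 : ‖riemannZeta (-(s t)) / Complex.sin (π * s t)‖ ≤ C * Real.exp (-(π/2) * |t|) :=
      hmb t
    have hexp : Real.exp (t * Complex.arg z) ≤ Real.exp (|Complex.arg z| * |t|) := by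
      rw [Real.exp_le_exp]
      calc t * Complex.arg z ≤ |t * Complex.arg z| := le_abs_self _
        _ = |Complex.arg z| * |t| := by rw [abs_mul]; ring
    calc ‖z ^ (-(s t))‖ * ‖riemannZeta (-(s t)) / Complex.sin (π * s t)‖
        ≤ (Complex.abs z ^ (-c) * Real.exp (t * Complex.arg z)) * (C * Real.exp (-(π/2) * |t|)) := by
          rw [h1]
          exact mul_le_mul_of_nonneg_left h2 (by positivity)
      _ ≤ (Complex.abs z ^ (-c) * Real.exp (|Complex.arg z| * |t|)) * (C * Real.exp (-(π/2) * |t|)) := by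
          have hcc : (0:ℝ) ≤ C * Real.exp (-(π/2) * |t|) := by positivity
          exact mul_le_mul_of_nonneg_right
            (mul_le_mul_of_nonneg_left hexp (by positivity)) hcc
      _ = (Complex.abs z ^ (-c) * C) * Real.exp (-(π/2 - |Complex.arg z|) * |t|) := by
          rw [show Complex.abs z ^ (-c) * Real.exp (|Complex.arg z| * |t|) * (C * Real.exp (-(π/2) * |t|))
              = Complex.abs z ^ (-c) * C * (Real.exp (|Complex.arg z| * |t|) * Real.exp (-(π/2) * |t|)) by ring,
            ← Real.exp_add]
          congr 1
          ring
  have hint : ∀ z : ℂ, z ≠ 0 → |Complex.arg z| < π / 2 →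
      Integrable (fun t : ℝ => z ^ (-(s t)) * riemannZeta (-(s t)) / Complex.sin (π * s t)) := by
    intro z hz harg
    have hb : 0 < π/2 - |Complex.arg z| := by linarith
    refine Integrable.mono' (((myint hb).const_mul (Complex.abs z ^ (-c) * C)))
      (hcont z hz).aestronglyMeasurable ?_
    exact Filter.Eventually.of_forall (habs z hz)
  refine ⟨hint, ?_⟩
  have hUeq : {z : ℂ | z ≠ 0 ∧ |Complex.arg z| < π / 2} = {z : ℂ | 0 < z.re} := by
    ext z
    simp only [Set.mem_setOf_eq, Complex.abs_arg_lt_pi_div_two_iff]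
    constructor
    · rintro ⟨h1, h2 | h2⟩
      · exact h2
      · exact absurd h2 h1
    · intro h
      exact ⟨fun h0 => by simp [h0] at h, Or.inl h⟩
  rw [hUeq]
  apply DifferentiableOn.analyticOn _ (isOpen_lt continuous_const Complex.continuous_re)
  intro z0 hz0
  simp only [Set.mem_setOf_eq] at hz0
  apply DifferentiableAt.differentiableWithinAt
  apply DifferentiableAt.const_mul
  have hz0ne : z0 ≠ 0 := fun h => by simp [h] at hz0
  have harg0 : |Complex.arg z0| < π / 2 := Complex.abs_arg_lt_pi_div_two_iff.2 (Or.inl hz0)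
  set ε : ℝ := z0.re / 2 with hε
  have hεpos : 0 < ε := by positivity
  set r : ℝ := z0.re / 2 with hr
  have hrpos : 0 < r := hεpos
  set R : ℝ := Complex.abs z0 + z0.re / 2 with hR
  have hRpos : 0 < R := by positivity
  set a : ℝ := Real.arccos (r / R) with ha
  have haπ : a < π/2 := Real.arccos_lt_pi_div_two.2 (by positivity)
  have ha0 : 0 ≤ a := Real.arccos_nonneg _
  set b : ℝ := π/2 - a with hb
  have hbpos : 0 < b := by simp only [hb]; linarith
  have hball : ∀ z ∈ Metric.ball z0 ε, 0 < z.re ∧ r ≤ Complex.abs z ∧ Complex.abs z ≤ R ∧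
      |Complex.arg z| ≤ a := by
    intro z hzb
    rw [Metric.mem_ball, Complex.dist_eq] at hzb
    have hre : r < z.re := by
      have h1 : |(z - z0).re| ≤ Complex.abs (z - z0) := Complex.abs_re_le_norm _
      have h2 := abs_lt.1 (lt_of_le_of_lt h1 hzb)
      have h3 : (z - z0).re = z.re - z0.re := by simp [Complex.sub_re]
      rw [h3] at h2
      simp only [hr]
      linarith [h2.1]
    have hzre : 0 < z.re := lt_trans hrpos hre
    have hzne : z ≠ 0 := fun h => by simp [h] at hzre
    have hle : Complex.abs z ≤ R := by
      have h1 : z = z0 + (z - z0) := by ring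
      calc Complex.abs z = Complex.abs (z0 + (z - z0)) := by rw [← h1]
        _ ≤ Complex.abs z0 + Complex.abs (z - z0) := Complex.abs.add_le _ _
        _ ≤ R := by simp only [hR]; linarith [show Complex.abs (z - z0) = ‖z - z0‖ from rfl]
    have hge : r ≤ Complex.abs z := le_trans hre.le (Complex.re_le_norm z)
    refine ⟨hzre, hge, hle, ?_⟩
    have hcos : r / R ≤ Real.cos (Complex.arg z) := by
      rw [Complex.cos_arg hzne]
      exact div_le_div₀ hzre.le hre.le (lt_of_lt_of_le hrpos hge) hle
    have h2 : |Complex.arg z| = Real.arccos (Real.cos |Complex.arg z|) :=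
      (Real.arccos_cos (abs_nonneg _) (Complex.abs_arg_le_pi z)).symm
    rw [h2, Real.cos_abs]
    simp only [ha, Real.arccos_eq_pi_div_two_sub_arcsin]
    have := Real.monotone_arcsin hcos
    linarith
  set F' : ℂ → ℝ → ℂ := fun z t => (-(s t)) * z ^ (-(s t) - 1) *
    (riemannZeta (-(s t)) / Complex.sin (π * s t) * Complex.I) with hF'
  have hexp1 : ∀ t : ℝ, c + |t| ≤ (c + 2/b) * Real.exp ((b/2) * |t|) := by
    intro t
    have h1 : |t| ≤ (2/b) * Real.exp ((b/2) * |t|) := by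
      have h2 : (b/2) * |t| ≤ Real.exp ((b/2) * |t|) := by
        linarith [Real.add_one_le_exp ((b/2) * |t|)]
      calc |t| = (2/b) * ((b/2) * |t|) := by field_simp
        _ ≤ (2/b) * Real.exp ((b/2) * |t|) := by
            apply mul_le_mul_of_nonneg_left h2 (by positivity)
    have h3 : (1:ℝ) ≤ Real.exp ((b/2) * |t|) := by
      rw [← Real.exp_zero]
      exact Real.exp_le_exp.2 (by positivity)
    nlinarith
  have h_bound : ∀ t : ℝ, ∀ z ∈ Metric.ball z0 ε, ‖F' z t‖ ≤
      ((c + 2/b) * r ^ (-c-1) * C) * Real.exp (-(b/2) * |t|) := by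
    intro t z hzb
    obtain ⟨hzre, hge, hle, harg⟩ := hball z hzb
    have hzne : z ≠ 0 := fun h => by simp [h] at hzre
    have pA : Complex.abs (-(s t)) ≤ c + |t| := by
      rw [map_neg_eq_map]
      calc Complex.abs (s t) ≤ Complex.abs (c:ℂ) + Complex.abs ((t:ℂ) * Complex.I) :=
            Complex.abs.add_le _ _
        _ = c + |t| := by
            rw [map_mul, Complex.abs_I, Complex.abs_ofReal, Complex.abs_ofReal,
              abs_of_pos hc0, mul_one]
    have pB : Complex.abs (z ^ (-(s t) - 1)) ≤ r ^ (-c-1) * Real.exp (a * |t|) := by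
      rw [Complex.abs_cpow_of_ne_zero hzne]
      have hre' : ((-(s t) - 1)).re = -c - 1 := by simp [hs]
      have him' : ((-(s t) - 1)).im = -t := by simp [hs]
      rw [hre', him']
      rw [show Complex.arg z * (-t) = -(t * Complex.arg z) by ring, Real.exp_neg,
        div_eq_mul_inv, inv_inv]
      have q1 : Complex.abs z ^ (-c-1) ≤ r ^ (-c-1) :=
        Real.rpow_le_rpow_of_nonpos hrpos hge (by linarith)
      have q2 : Real.exp (t * Complex.arg z) ≤ Real.exp (a * |t|) := by
        rw [Real.exp_le_exp]
        calc t * Complex.arg z ≤ |t * Complex.arg z| := le_abs_self _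
          _ = |Complex.arg z| * |t| := by rw [abs_mul]; ring
          _ ≤ a * |t| := mul_le_mul_of_nonneg_right harg (abs_nonneg t)
      exact mul_le_mul q1 q2 (Real.exp_pos _).le (by positivity)
    have pC : Complex.abs (riemannZeta (-(s t)) / Complex.sin (π * s t) * Complex.I)
        ≤ C * Real.exp (-(π/2) * |t|) := by
      rw [map_mul, Complex.abs_I, mul_one]
      exact hmb t
    calc ‖F' z t‖ = Complex.abs (-(s t)) * Complex.abs (z ^ (-(s t) - 1)) *
          Complex.abs (riemannZeta (-(s t)) / Complex.sin (π * s t) * Complex.I) := by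
          simp only [hF', Complex.norm_eq_abs, map_mul]
      _ ≤ (c + |t|) * (r ^ (-c-1) * Real.exp (a * |t|)) * (C * Real.exp (-(π/2) * |t|)) := by
          apply mul_le_mul (mul_le_mul pA pB (Complex.abs.nonneg _) (by positivity))
            pC (Complex.abs.nonneg _) (by positivity)
      _ ≤ ((c + 2/b) * Real.exp ((b/2) * |t|)) * (r ^ (-c-1) * Real.exp (a * |t|)) *
            (C * Real.exp (-(π/2) * |t|)) := by
          apply mul_le_mul_of_nonneg_right (mul_le_mul_of_nonneg_right (hexp1 t) (by positivity))
            (by positivity)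
      _ = ((c + 2/b) * r ^ (-c-1) * C) *
            (Real.exp ((b/2) * |t|) * Real.exp (a * |t|) * Real.exp (-(π/2) * |t|)) := by ring
      _ = ((c + 2/b) * r ^ (-c-1) * C) * Real.exp (-(b/2) * |t|) := by
          rw [← Real.exp_add, ← Real.exp_add]
          congr 1
          simp only [hb]
          ring
  have h_diff : ∀ t : ℝ, ∀ z ∈ Metric.ball z0 ε,
      HasDerivAt (fun z : ℂ => z ^ (-(s t)) * riemannZeta (-(s t)) / Complex.sin (π * s t) *
        Complex.I) (F' z t) z := by
    intro t z hzb
    obtain ⟨hzre, _, _, _⟩ := hball z hzb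
    have hfe : (fun z : ℂ => z ^ (-(s t)) * riemannZeta (-(s t)) / Complex.sin (π * s t) *
        Complex.I) = fun z : ℂ => z ^ (-(s t)) *
          (riemannZeta (-(s t)) / Complex.sin (π * s t) * Complex.I) := by
      funext w
      rw [mul_div_assoc, mul_assoc]
    rw [hfe]
    exact ((Complex.hasStrictDerivAt_cpow_const
      (Complex.mem_slitPlane_iff.2 (Or.inl hzre))).hasDerivAt).mul_const _
  have hmain := hasDerivAt_integral_of_dominated_loc_of_deriv_le (μ := (volume : Measure ℝ))
    (x₀ := z0) (Metric.ball_mem_nhds z0 hεpos)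
    (by
      filter_upwards [Metric.ball_mem_nhds z0 hεpos] with z hzb
      obtain ⟨hzre, _, _, _⟩ := hball z hzb
      have hzne : z ≠ 0 := fun h => by simp [h] at hzre
      exact ((hcont z hzne).mul continuous_const).aestronglyMeasurable)
    ((hint z0 hz0ne harg0).mul_const Complex.I)
    (by
      haveI : NeZero z0 := ⟨hz0ne⟩
      have c1 : Continuous (fun t : ℝ => -(s t)) := hs_cont.neg
      have c2 : Continuous (fun t : ℝ => z0 ^ (-(s t) - 1)) :=
        (continuous_const_cpow z0).comp (c1.sub continuous_const)
      have c3 : Continuous (fun t : ℝ => riemannZeta (-(s t)) / Complex.sin (π * s t) *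
          Complex.I) :=
        ((hzeta_cont.div (Complex.continuous_sin.comp (continuous_const.mul hs_cont))
          hsin_ne).mul continuous_const)
      exact ((c1.mul c2).mul c3).aestronglyMeasurable)
    (Filter.Eventually.of_forall fun t z hzb => h_bound t z hzb)
    ((myint (half_pos hbpos)).const_mul _)
    (Filter.Eventually.of_forall fun t z hzb => h_diff t z hzb)
  exact hmain.2.differentiableAt
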